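/- For every k ≥ 0, the element e_k = γ^{-1} Σ μ_v(g) μ_v(h) ((p,h,h) ; (p,g,g)) of P_{k+2} — the sum being over all k-paths p with end vertex v and all pairs of edges g, h incident to v — is a self-adjoint idempotent: e_k² = e_k and e_k* = e_k, where * is the conjugate-linear involution determined by (f; e)* = (e; f). -/

import Mathlib

open scoped Classical

noncomputable section

variable {Γa Γb E : Type*}

/-- The condition for `(base, p)` to be a `k`-path based in `Γa` in the bipartite graph with
source map `s : E → Γa` and target map `t : E → Γb`: the path starts at `base`, and the edges
are traversed alternately forwards and backwards, i.e. `t (p (2i-1)) = t (p (2i))` and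
`s (p (2i)) = s (p (2i+1))` (with 1-based indexing). -/
def IsPath (s : E → Γa) (t : E → Γb) (k : ℕ) (base : Γa) (p : Fin k → E) : Prop :=
  (∀ h : 0 < k, s (p ⟨0, h⟩) = base) ∧
    ∀ (j : Fin k) (hj : (j : ℕ) + 1 < k),
      if Even (j : ℕ) then t (p j) = t (p ⟨(j : ℕ) + 1, hj⟩)
      else s (p j) = s (p ⟨(j : ℕ) + 1, hj⟩)

/-- A `k`-path based in `Γa`: a base vertex together with an alternating edge sequence. -/
def GPath (s : E → Γa) (t : E → Γb) (k : ℕ) :=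
  { bp : Γa × (Fin k → E) // IsPath s t k bp.1 bp.2 }

namespace GPath

variable {s : E → Γa} {t : E → Γb} {k : ℕ}

/-- The start vertex of a path. -/
def base (p : GPath s t k) : Γa := p.1.1

/-- The edge sequence of a path. -/
def edges (p : GPath s t k) : Fin k → E := p.1.2

/-- The end vertex of a path: the vertex reached after the `k` steps. -/
def endV (p : GPath s t k) : Γa ⊕ Γb :=
  if h : 0 < k then
    if Even k then Sum.inl (s (p.edges ⟨k - 1, Nat.sub_lt h one_pos⟩))
    else Sum.inr (t (p.edges ⟨k - 1, Nat.sub_lt h one_pos⟩))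
  else Sum.inl p.base

end GPath

/-- A `2k`-loop based in `Γa`, encoded as a pair `(f; e)` of `k`-paths with the same start
and the same end. -/
def Loop (s : E → Γa) (t : E → Γb) (k : ℕ) :=
  { fe : GPath s t k × GPath s t k // fe.1.base = fe.2.base ∧ fe.1.endV = fe.2.endV }

namespace Loop

variable {s : E → Γa} {t : E → Γb} {k : ℕ}

/-- The first path `f` of the loop `(f; e)`. -/
def f (l : Loop s t k) : GPath s t k := l.1.1

/-- The second path `e` of the loop `(f; e)`. -/
def e (l : Loop s t k) : GPath s t k := l.1.2

end Loop

variable [Fintype Γa] [Fintype Γb] [Fintype E]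

instance instFintypeGPath {s : E → Γa} {t : E → Γb} {k : ℕ} : Fintype (GPath s t k) :=
  Subtype.fintype _

instance instFintypeLoop {s : E → Γa} {t : E → Γb} {k : ℕ} : Fintype (Loop s t k) :=
  Subtype.fintype _

/-- The loop multiplication on `P_k = (Loop s t k → ℂ)`, determined on basis loops by
`(f; e) · (h; g) = δ_{f,g} (h; e)`. -/
def lmul {s : E → Γa} {t : E → Γb} {k : ℕ} (x y : Loop s t k → ℂ) : Loop s t k → ℂ :=
  fun l => ∑ l₁ : Loop s t k, ∑ l₂ : Loop s t k,
    if l₁.f = l₂.e ∧ l₁.e = l.e ∧ l₂.f = l.f then x l₁ * y l₂ else 0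

/-- The unit of `P_k`: the sum of `(p; p)` over all `k`-paths `p`. -/
def lone {s : E → Γa} {t : E → Γb} {k : ℕ} : Loop s t k → ℂ :=
  fun l => if l.f = l.e then 1 else 0

/-- `L` is obtained from the loop `l = (f; e)` by appending the same edge `g` to both `f`
and `e`. -/
def ExtendsBy {s : E → Γa} {t : E → Γb} {k : ℕ} (l : Loop s t k) (L : Loop s t (k + 1)) :
    Prop :=
  ∃ g : E, L.f.1 = (l.f.base, Fin.snoc l.f.edges g) ∧ L.e.1 = (l.e.base, Fin.snoc l.e.edges g)

/-- The inclusion `I_k : P_k → P_{k+1}`, determined on basis loops by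
`I_k (f; e) = ∑_g (f,g; e,g)`, the sum being over the edges `g` incident to the common end
vertex of `f` and `e`. -/
def incl {s : E → Γa} {t : E → Γb} {k : ℕ} (x : Loop s t k → ℂ) : Loop s t (k + 1) → ℂ :=
  fun L => ∑ l : Loop s t k, if ExtendsBy l L then x l else 0


/-- `μ_v(g) = √(η(w)/η(v))`, where `w` is the endpoint of the edge `g` other than `v`. -/
def mu (s : E → Γa) (t : E → Γb) (η : Γa ⊕ Γb → ℝ) (v : Γa ⊕ Γb) (g : E) : ℝ :=
  match v with
  | Sum.inl va => Real.sqrt (η (Sum.inr (t g)) / η (Sum.inl va))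
  | Sum.inr vb => Real.sqrt (η (Sum.inl (s g)) / η (Sum.inr vb))

/-- The vertex to which an edge appended at (0-based) position `k` of a path is attached:
a vertex of `Γa` if `k` is even, a vertex of `Γb` if `k` is odd. -/
def attachV (s : E → Γa) (t : E → Γb) (k : ℕ) (g : E) : Γa ⊕ Γb :=
  if Even k then Sum.inl (s g) else Sum.inr (t g)

/-- The Jones projection element
`e_k = γ⁻¹ ∑ μ_v(g) μ_v(h) ((p,h,h); (p,g,g)) ∈ P_{k+2}`, the sum being over all `k`-paths
`p` with end vertex `v` and all pairs of edges `g, h` incident to `v`. -/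
def jonesE (s : E → Γa) (t : E → Γb) (γ : ℝ) (η : Γa ⊕ Γb → ℝ) (k : ℕ) :
    Loop s t (k + 2) → ℂ :=
  fun L =>
    if (∀ i : Fin k, L.f.edges (Fin.castLE (by omega) i) = L.e.edges (Fin.castLE (by omega) i))
        ∧ L.f.edges ⟨k, by omega⟩ = L.f.edges ⟨k + 1, by omega⟩
        ∧ L.e.edges ⟨k, by omega⟩ = L.e.edges ⟨k + 1, by omega⟩ then
      ((γ⁻¹ * mu s t η (attachV s t k (L.e.edges ⟨k, by omega⟩)) (L.e.edges ⟨k, by omega⟩)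
          * mu s t η (attachV s t k (L.f.edges ⟨k, by omega⟩)) (L.f.edges ⟨k, by omega⟩) : ℝ)
        : ℂ)
    else 0

/-- The conjugate-linear involution `*` on `P_k`, determined by `(f; e)* = (e; f)`. -/
def starP {s : E → Γa} {t : E → Γb} {k : ℕ} (x : Loop s t k → ℂ) : Loop s t k → ℂ :=
  fun l => (starRingEnd ℂ) (x ⟨(l.e, l.f), l.2.1.symm, l.2.2.symm⟩)

section Aux

variable {s : E → Γa} {t : E → Γb} {k : ℕ} (γ : ℝ) (η : Γa ⊕ Γb → ℝ)

/-- The support condition of the Jones element. -/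
def jonesCond (L : Loop s t (k + 2)) : Prop :=
  (∀ i : Fin k, L.f.edges (Fin.castLE (by omega) i) = L.e.edges (Fin.castLE (by omega) i))
    ∧ L.f.edges ⟨k, by omega⟩ = L.f.edges ⟨k + 1, by omega⟩
    ∧ L.e.edges ⟨k, by omega⟩ = L.e.edges ⟨k + 1, by omega⟩

lemma jonesE_def (L : Loop s t (k + 2)) :
    jonesE s t γ η k L =
      if jonesCond L then
        ((γ⁻¹ * mu s t η (attachV s t k (L.e.edges ⟨k, by omega⟩)) (L.e.edges ⟨k, by omega⟩)
            * mu s t η (attachV s t k (L.f.edges ⟨k, by omega⟩)) (L.f.edges ⟨k, by omega⟩) : ℝ)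
          : ℂ)
      else 0 := by unfold jonesE jonesCond; congr!

lemma starP_jonesE : starP (jonesE s t γ η k) = jonesE s t γ η k := by
  funext l
  show (starRingEnd ℂ) (jonesE s t γ η k ⟨(l.e, l.f), l.2.1.symm, l.2.2.symm⟩) = _
  rw [jonesE_def, jonesE_def γ η ⟨(l.e, l.f), l.2.1.symm, l.2.2.symm⟩]
  by_cases h : jonesCond l
  · rw [if_pos h, if_pos ⟨fun i => (h.1 i).symm, h.2.2, h.2.1⟩, Complex.conj_ofReal]
    show ((_ : ℝ) : ℂ) = ((_ : ℝ) : ℂ)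
    congr 1
    show γ⁻¹ * mu s t η (attachV s t k (l.f.edges _)) (l.f.edges _)
        * mu s t η (attachV s t k (l.e.edges _)) (l.e.edges _) = _
    ring
  · rw [if_neg h, if_neg (fun hc => h ⟨fun i => (hc.1 i).symm, hc.2.2, hc.2.1⟩), map_zero]

set_option linter.unusedSectionVars false

lemma endV_k2 (P : GPath s t (k + 2)) :
    P.endV = attachV s t k (P.edges ⟨k + 1, by omega⟩) := by
  unfold GPath.endV attachV
  rw [dif_pos (by omega : 0 < k + 2)]
  have hpar : Even (k + 2) ↔ Even k := by
    simp [Nat.even_add]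
  by_cases hk : Even k
  · rw [if_pos (hpar.mpr hk), if_pos hk]; rfl
  · rw [if_neg (fun h => hk (hpar.mp h)), if_neg hk]; rfl

/-- Extend the edge list of a `(k+2)`-path by overwriting the last two edges with `g`. -/
def extEdges (pe : Fin (k + 2) → E) (g : E) : Fin (k + 2) → E :=
  fun i => if (i : ℕ) < k then pe i else g

lemma extEdges_lt (pe : Fin (k + 2) → E) (g : E) (i : Fin (k + 2)) (h : (i : ℕ) < k) :
    extEdges pe g i = pe i := if_pos h

lemma extEdges_ge (pe : Fin (k + 2) → E) (g : E) (i : Fin (k + 2)) (h : ¬ (i : ℕ) < k) :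
    extEdges pe g i = g := if_neg h

lemma isPath_ext (P : GPath s t (k + 2)) (g : E)
    (hA : attachV s t k g = attachV s t k (P.edges ⟨k, by omega⟩)) :
    IsPath s t (k + 2) P.base (extEdges P.edges g) := by
  obtain ⟨h0, halt⟩ := P.2
  constructor
  · intro h
    by_cases hk : 0 < k
    · rw [extEdges_lt _ _ _ hk]; exact h0 h
    · have hk0 : k = 0 := by omega
      rw [extEdges_ge _ _ _ (by omega)]
      subst hk0
      simp only [attachV, if_pos (Even.zero)] at hA
      rw [Sum.inl.injEq] at hA
      rw [hA]
      exact h0 (by omega)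
  · intro j hj
    by_cases h1 : (j : ℕ) + 1 < k
    · rw [extEdges_lt _ _ j (by omega), extEdges_lt _ _ ⟨(j : ℕ) + 1, hj⟩ h1]
      exact halt j hj
    · by_cases h2 : (j : ℕ) < k
      · have hjk : (j : ℕ) + 1 = k := by omega
        rw [extEdges_lt _ _ j h2, extEdges_ge _ _ ⟨(j : ℕ) + 1, hj⟩ (by show ¬ (j : ℕ) + 1 < k; omega)]
        have He := halt j hj
        have hfin : (⟨(j : ℕ) + 1, hj⟩ : Fin (k + 2)) = ⟨k, by omega⟩ := Fin.ext hjk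
        rw [hfin] at He
        by_cases hk : Even k
        · have hje : ¬ Even (j : ℕ) := by
            simp only [Nat.even_iff] at hk ⊢; omega
          rw [if_neg hje] at He ⊢
          simp only [attachV, if_pos hk, Sum.inl.injEq] at hA
          rw [hA]; exact He
        · have hje : Even (j : ℕ) := by
            simp only [Nat.even_iff] at hk ⊢; omega
          rw [if_pos hje] at He ⊢
          simp only [attachV, if_neg hk, Sum.inr.injEq] at hA
          rw [hA]; exact He
      · rw [extEdges_ge _ _ j h2, extEdges_ge _ _ ⟨(j : ℕ) + 1, hj⟩ (by show ¬ (j : ℕ) + 1 < k; omega)]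
        split <;> rfl

lemma endV_ext (P : GPath s t (k + 2)) (g : E)
    (hA : attachV s t k g = attachV s t k (P.edges ⟨k, by omega⟩)) :
    GPath.endV (⟨(P.base, extEdges P.edges g), isPath_ext P g hA⟩ : GPath s t (k + 2))
      = attachV s t k g := by
  refine (endV_k2 _).trans ?_
  show attachV s t k (extEdges P.edges g ⟨k + 1, by omega⟩) = _
  rw [extEdges_ge _ _ _ (by show ¬ k + 1 < k; omega)]

lemma sum_mu_sq (hη : ∀ x, 0 < η x)
    (heig₁ : ∀ va : Γa,
      (∑ g : E, if s g = va then η (Sum.inr (t g)) else 0) = γ * η (Sum.inl va))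
    (heig₂ : ∀ vb : Γb,
      (∑ g : E, if t g = vb then η (Sum.inl (s g)) else 0) = γ * η (Sum.inr vb))
    (e0 : E) :
    (∑ g ∈ Finset.univ.filter (fun g : E => attachV s t k g = attachV s t k e0),
      (mu s t η (attachV s t k e0) g) ^ 2) = γ := by
  rw [Finset.sum_filter]
  by_cases hk : Even k
  · have h1 : ∀ g : E, (if (attachV s t k g = attachV s t k e0) then
        (mu s t η (attachV s t k e0) g) ^ 2 else 0)
        = (if s g = s e0 then η (Sum.inr (t g)) else 0) / η (Sum.inl (s e0)) := by
      intro g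
      simp only [attachV, mu, if_pos hk]
      by_cases hs : s g = s e0
      · rw [if_pos (by rw [hs]), if_pos hs,
          Real.sq_sqrt (le_of_lt (div_pos (hη _) (hη _)))]
      · rw [if_neg (by simpa using hs), if_neg hs, zero_div]
    simp_rw [h1]
    rw [← Finset.sum_div, heig₁, mul_div_assoc, div_self (ne_of_gt (hη _)), mul_one]
  · have h1 : ∀ g : E, (if (attachV s t k g = attachV s t k e0) then
        (mu s t η (attachV s t k e0) g) ^ 2 else 0)
        = (if t g = t e0 then η (Sum.inl (s g)) else 0) / η (Sum.inr (t e0)) := by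
      intro g
      simp only [attachV, mu, if_neg hk]
      by_cases hs : t g = t e0
      · rw [if_pos (by rw [hs]), if_pos hs,
          Real.sq_sqrt (le_of_lt (div_pos (hη _) (hη _)))]
      · rw [if_neg (by simpa using hs), if_neg hs, zero_div]
    simp_rw [h1]
    rw [← Finset.sum_div, heig₂, mul_div_assoc, div_self (ne_of_gt (hη _)), mul_one]

/-- The `(k+2)`-path obtained from `P` by overwriting the last two edges with `g`. -/
def extPath (P : GPath s t (k + 2)) (g : E)
    (hA : attachV s t k g = attachV s t k (P.edges ⟨k, by omega⟩)) : GPath s t (k + 2) :=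
  ⟨(P.base, extEdges P.edges g), isPath_ext P g hA⟩

lemma extPath_endV (P : GPath s t (k + 2)) (g : E)
    (hA : attachV s t k g = attachV s t k (P.edges ⟨k, by omega⟩)) :
    GPath.endV (extPath P g hA) = attachV s t k g := endV_ext P g hA

lemma endV_e (l : Loop s t (k + 2)) (hC : jonesCond l) :
    GPath.endV l.e = attachV s t k (l.e.edges ⟨k, by omega⟩) := by
  rw [endV_k2, ← hC.2.2]

lemma attach_extract (p : Loop s t (k + 2)) (hc : jonesCond p) :
    attachV s t k (p.f.edges ⟨k, by omega⟩) = attachV s t k (p.e.edges ⟨k, by omega⟩) := by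
  have h2 : GPath.endV p.f = GPath.endV p.e := p.2.2
  rw [endV_k2, endV_k2, ← hc.2.1, ← hc.2.2] at h2
  exact h2

/-- The first loop `(p g g ; e)` of the pair associated to an edge `g`. -/
def psi1 (l : Loop s t (k + 2)) (hC : jonesCond l) (g : E)
    (hA : attachV s t k g = attachV s t k (l.e.edges ⟨k, by omega⟩)) : Loop s t (k + 2) :=
  ⟨(extPath l.e g hA, l.e), rfl, (extPath_endV l.e g hA).trans (hA.trans (endV_e l hC).symm)⟩

/-- The second loop `(f ; p g g)` of the pair associated to an edge `g`. -/
def psi2 (l : Loop s t (k + 2)) (hC : jonesCond l) (g : E)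
    (hA : attachV s t k g = attachV s t k (l.e.edges ⟨k, by omega⟩)) : Loop s t (k + 2) :=
  ⟨(l.f, extPath l.e g hA), l.2.1,
    (l.2.2 : GPath.endV l.f = GPath.endV l.e).trans
      ((endV_e l hC).trans (hA.symm.trans (extPath_endV l.e g hA).symm))⟩

lemma jonesCond_psi1 (l : Loop s t (k + 2)) (hC : jonesCond l) (g : E)
    (hA : attachV s t k g = attachV s t k (l.e.edges ⟨k, by omega⟩)) :
    jonesCond (psi1 l hC g hA) := by
  refine ⟨fun i => ?_, ?_, hC.2.2⟩
  · show extEdges l.e.edges g (Fin.castLE (by omega) i) = l.e.edges (Fin.castLE (by omega) i)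
    rw [extEdges_lt _ _ _ (by exact i.isLt)]
  · show extEdges l.e.edges g ⟨k, by omega⟩ = extEdges l.e.edges g ⟨k + 1, by omega⟩
    rw [extEdges_ge _ _ _ (by show ¬ k < k; omega),
      extEdges_ge _ _ _ (by show ¬ k + 1 < k; omega)]

lemma jonesCond_psi2 (l : Loop s t (k + 2)) (hC : jonesCond l) (g : E)
    (hA : attachV s t k g = attachV s t k (l.e.edges ⟨k, by omega⟩)) :
    jonesCond (psi2 l hC g hA) := by
  refine ⟨fun i => ?_, hC.2.1, ?_⟩
  · show l.f.edges (Fin.castLE (by omega) i) = extEdges l.e.edges g (Fin.castLE (by omega) i)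
    rw [extEdges_lt _ _ _ (by exact i.isLt)]
    exact hC.1 i
  · show extEdges l.e.edges g ⟨k, by omega⟩ = extEdges l.e.edges g ⟨k + 1, by omega⟩
    rw [extEdges_ge _ _ _ (by show ¬ k < k; omega),
      extEdges_ge _ _ _ (by show ¬ k + 1 < k; omega)]

lemma psi_reconstruct (l : Loop s t (k + 2)) (p₁ : Loop s t (k + 2))
    (h1e : p₁.e = l.e) (hc1 : jonesCond p₁)
    (hA : attachV s t k (p₁.f.edges ⟨k, by omega⟩)
      = attachV s t k (l.e.edges ⟨k, by omega⟩)) :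
    p₁.f = extPath l.e (p₁.f.edges ⟨k, by omega⟩) hA := by
  apply Subtype.ext
  apply Prod.ext
  · show GPath.base p₁.f = GPath.base l.e
    have hb : GPath.base p₁.f = GPath.base p₁.e := p₁.2.1
    rw [h1e] at hb
    exact hb
  · funext i
    show p₁.f.edges i = extEdges l.e.edges (p₁.f.edges ⟨k, by omega⟩) i
    by_cases hik : (i : ℕ) < k
    · rw [extEdges_lt _ _ _ hik]
      have h := hc1.1 ⟨(i : ℕ), hik⟩
      have hcast : (Fin.castLE (by omega : k ≤ k + 2) ⟨(i : ℕ), hik⟩) = i := Fin.ext rfl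
      rw [hcast, h1e] at h
      exact h
    · rw [extEdges_ge _ _ _ hik]
      by_cases hik2 : (i : ℕ) = k
      · have : i = ⟨k, by omega⟩ := Fin.ext hik2
        rw [this]
      · have hik3 : (i : ℕ) = k + 1 := by omega
        have : i = ⟨k + 1, by omega⟩ := Fin.ext hik3
        rw [this, ← hc1.2.1]

lemma lmul_jonesE (hγ : 0 < γ) (hη : ∀ x, 0 < η x)
    (heig₁ : ∀ va : Γa,
      (∑ g : E, if s g = va then η (Sum.inr (t g)) else 0) = γ * η (Sum.inl va))
    (heig₂ : ∀ vb : Γb,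
      (∑ g : E, if t g = vb then η (Sum.inl (s g)) else 0) = γ * η (Sum.inr vb)) :
    lmul (jonesE s t γ η k) (jonesE s t γ η k) = jonesE s t γ η k := by
  funext l
  show (∑ l₁ : Loop s t (k + 2), ∑ l₂ : Loop s t (k + 2),
      if l₁.f = l₂.e ∧ l₁.e = l.e ∧ l₂.f = l.f then
        jonesE s t γ η k l₁ * jonesE s t γ η k l₂ else 0) = _
  rw [← Fintype.sum_prod_type']
  have hfilter : (∑ p : Loop s t (k + 2) × Loop s t (k + 2),
        if p.1.f = p.2.e ∧ p.1.e = l.e ∧ p.2.f = l.f then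
          jonesE s t γ η k p.1 * jonesE s t γ η k p.2 else 0)
      = ∑ p ∈ Finset.univ.filter (fun p : Loop s t (k + 2) × Loop s t (k + 2) =>
          (p.1.f = p.2.e ∧ p.1.e = l.e ∧ p.2.f = l.f) ∧ jonesCond p.1 ∧ jonesCond p.2),
          if p.1.f = p.2.e ∧ p.1.e = l.e ∧ p.2.f = l.f then
            jonesE s t γ η k p.1 * jonesE s t γ η k p.2 else 0 := by
    refine (Finset.sum_filter_of_ne ?_).symm
    intro p _ hne
    by_cases hstr : p.1.f = p.2.e ∧ p.1.e = l.e ∧ p.2.f = l.f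
    · refine ⟨hstr, ?_, ?_⟩
      · by_contra hc1
        exact hne (by rw [if_pos hstr, jonesE_def γ η p.1, if_neg hc1, zero_mul])
      · by_contra hc2
        exact hne (by rw [if_pos hstr, jonesE_def γ η p.2, if_neg hc2, mul_zero])
    · exact absurd (if_neg hstr) hne
  rw [hfilter]
  by_cases hC : jonesCond l
  · -- main case
    have hvf : attachV s t k (l.f.edges ⟨k, by omega⟩)
        = attachV s t k (l.e.edges ⟨k, by omega⟩) := attach_extract l hC
    -- the bijection with the set of edges attached to the common end vertex
    have hbij : (∑ p ∈ Finset.univ.filter (fun p : Loop s t (k + 2) × Loop s t (k + 2) =>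
          (p.1.f = p.2.e ∧ p.1.e = l.e ∧ p.2.f = l.f) ∧ jonesCond p.1 ∧ jonesCond p.2),
          if p.1.f = p.2.e ∧ p.1.e = l.e ∧ p.2.f = l.f then
            jonesE s t γ η k p.1 * jonesE s t γ η k p.2 else 0)
        = ∑ g ∈ Finset.univ.filter (fun g : E =>
            attachV s t k g = attachV s t k (l.e.edges ⟨k, by omega⟩)),
            ((γ⁻¹ * mu s t η (attachV s t k (l.e.edges ⟨k, by omega⟩))
                (l.e.edges ⟨k, by omega⟩)
              * mu s t η (attachV s t k (l.e.edges ⟨k, by omega⟩)) g : ℝ) : ℂ)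
            * ((γ⁻¹ * mu s t η (attachV s t k (l.e.edges ⟨k, by omega⟩)) g
              * mu s t η (attachV s t k (l.e.edges ⟨k, by omega⟩))
                (l.f.edges ⟨k, by omega⟩) : ℝ) : ℂ) := by
      refine Finset.sum_bij' (fun p _ => p.1.f.edges ⟨k, by omega⟩)
        (fun g hg => (psi1 l hC g (Finset.mem_filter.mp hg).2,
          psi2 l hC g (Finset.mem_filter.mp hg).2)) ?_ ?_ ?_ ?_ ?_
      · -- hi : extract lands in the edge set
        intro p hp
        obtain ⟨-, ⟨h12, h1e, h2f⟩, hc1, hc2⟩ := Finset.mem_filter.mp hp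
        refine Finset.mem_filter.mpr ⟨Finset.mem_univ _, ?_⟩
        have h := attach_extract p.1 hc1
        rw [h1e] at h
        exact h
      · -- hj : psi pair lands in the loop-pair set
        intro g hg
        exact Finset.mem_filter.mpr ⟨Finset.mem_univ _, ⟨rfl, rfl, rfl⟩,
          jonesCond_psi1 l hC g _, jonesCond_psi2 l hC g _⟩
      · -- left inverse : reconstruct the pair from the extracted edge
        intro p hp
        obtain ⟨-, ⟨h12, h1e, h2f⟩, hc1, hc2⟩ := Finset.mem_filter.mp hp
        have hA : attachV s t k (p.1.f.edges ⟨k, by omega⟩)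
            = attachV s t k (l.e.edges ⟨k, by omega⟩) := by
          have h := attach_extract p.1 hc1
          rw [h1e] at h
          exact h
        have hrec := psi_reconstruct l p.1 h1e hc1 hA
        refine Prod.ext ?_ ?_
        · show psi1 l hC _ _ = p.1
          apply Subtype.ext
          apply Prod.ext
          · exact (hrec.symm : _)
          · exact h1e.symm
        · show psi2 l hC _ _ = p.2
          apply Subtype.ext
          apply Prod.ext
          · exact h2f.symm
          · exact hrec.symm.trans h12
      · -- right inverse : the extracted edge of the psi pair is g
        intro g hg
        show extEdges l.e.edges g ⟨k, by omega⟩ = g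
        exact extEdges_ge _ _ _ (by show ¬ k < k; omega)
      · -- values agree
        intro p hp
        obtain ⟨-, ⟨h12, h1e, h2f⟩, hc1, hc2⟩ := Finset.mem_filter.mp hp
        have hA : attachV s t k (p.1.f.edges ⟨k, by omega⟩)
            = attachV s t k (l.e.edges ⟨k, by omega⟩) := by
          have h := attach_extract p.1 hc1
          rw [h1e] at h
          exact h
        have hA2 : attachV s t k (p.2.e.edges ⟨k, by omega⟩)
            = attachV s t k (l.e.edges ⟨k, by omega⟩) := by
          rw [← h12]; exact hA
        have hA2f : attachV s t k (p.2.f.edges ⟨k, by omega⟩)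
            = attachV s t k (l.e.edges ⟨k, by omega⟩) := by
          rw [h2f, hvf]
        rw [if_pos ⟨h12, h1e, h2f⟩, jonesE_def γ η p.1, if_pos hc1,
          jonesE_def γ η p.2, if_pos hc2]
        congr 2
        · rw [h1e, hA]
        · rw [hA2, hA2f, ← h12, h2f]
    rw [hbij, jonesE_def, if_pos hC, hvf]
    have hre : (∑ g ∈ Finset.univ.filter (fun g : E =>
          attachV s t k g = attachV s t k (l.e.edges ⟨k, by omega⟩)),
          (γ⁻¹ * mu s t η (attachV s t k (l.e.edges ⟨k, by omega⟩))
              (l.e.edges ⟨k, by omega⟩)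
            * mu s t η (attachV s t k (l.e.edges ⟨k, by omega⟩)) g)
          * (γ⁻¹ * mu s t η (attachV s t k (l.e.edges ⟨k, by omega⟩)) g
            * mu s t η (attachV s t k (l.e.edges ⟨k, by omega⟩))
              (l.f.edges ⟨k, by omega⟩)))
        = γ⁻¹ * mu s t η (attachV s t k (l.e.edges ⟨k, by omega⟩))
            (l.e.edges ⟨k, by omega⟩)
          * mu s t η (attachV s t k (l.e.edges ⟨k, by omega⟩))
            (l.f.edges ⟨k, by omega⟩) := by
      have hmusq := sum_mu_sq (k := k) γ η hη heig₁ heig₂ (l.e.edges ⟨k, (by omega : k < k + 2)⟩)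
      set a := mu s t η (attachV s t k (l.e.edges ⟨k, by omega⟩))
        (l.e.edges ⟨k, by omega⟩) with ha
      set b := mu s t η (attachV s t k (l.e.edges ⟨k, by omega⟩))
        (l.f.edges ⟨k, by omega⟩) with hb
      calc (∑ g ∈ Finset.univ.filter (fun g : E =>
            attachV s t k g = attachV s t k (l.e.edges ⟨k, by omega⟩)),
            (γ⁻¹ * a * mu s t η (attachV s t k (l.e.edges ⟨k, by omega⟩)) g)
            * (γ⁻¹ * mu s t η (attachV s t k (l.e.edges ⟨k, by omega⟩)) g * b))
          = ∑ g ∈ Finset.univ.filter (fun g : E =>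
              attachV s t k g = attachV s t k (l.e.edges ⟨k, by omega⟩)),
              (γ⁻¹ * a * (γ⁻¹ * b))
              * (mu s t η (attachV s t k (l.e.edges ⟨k, by omega⟩)) g) ^ 2 :=
            Finset.sum_congr rfl (fun g _ => by ring)
        _ = (γ⁻¹ * a * (γ⁻¹ * b)) * ∑ g ∈ Finset.univ.filter (fun g : E =>
              attachV s t k g = attachV s t k (l.e.edges ⟨k, by omega⟩)),
              (mu s t η (attachV s t k (l.e.edges ⟨k, by omega⟩)) g) ^ 2 :=
            (Finset.mul_sum _ _ _).symm
        _ = γ⁻¹ * a * b := by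
            rw [hmusq]
            have hne : γ ≠ 0 := ne_of_gt hγ
            field_simp
    calc (∑ g ∈ Finset.univ.filter (fun g : E =>
          attachV s t k g = attachV s t k (l.e.edges ⟨k, by omega⟩)),
          ((γ⁻¹ * mu s t η (attachV s t k (l.e.edges ⟨k, by omega⟩))
              (l.e.edges ⟨k, by omega⟩)
            * mu s t η (attachV s t k (l.e.edges ⟨k, by omega⟩)) g : ℝ) : ℂ)
          * ((γ⁻¹ * mu s t η (attachV s t k (l.e.edges ⟨k, by omega⟩)) g
            * mu s t η (attachV s t k (l.e.edges ⟨k, by omega⟩))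
              (l.f.edges ⟨k, by omega⟩) : ℝ) : ℂ))
        = ((∑ g ∈ Finset.univ.filter (fun g : E =>
            attachV s t k g = attachV s t k (l.e.edges ⟨k, by omega⟩)),
            (γ⁻¹ * mu s t η (attachV s t k (l.e.edges ⟨k, by omega⟩))
                (l.e.edges ⟨k, by omega⟩)
              * mu s t η (attachV s t k (l.e.edges ⟨k, by omega⟩)) g)
            * (γ⁻¹ * mu s t η (attachV s t k (l.e.edges ⟨k, by omega⟩)) g
              * mu s t η (attachV s t k (l.e.edges ⟨k, by omega⟩))
                (l.f.edges ⟨k, by omega⟩)) : ℝ) : ℂ) := by push_cast; rfl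
      _ = _ := by rw [hre]
  · -- degenerate case : the loop is not in the support
    rw [jonesE_def, if_neg hC]
    apply Finset.sum_eq_zero
    intro p hp
    obtain ⟨-, ⟨h12, h1e, h2f⟩, hc1, hc2⟩ := Finset.mem_filter.mp hp
    exfalso
    apply hC
    refine ⟨fun i => ?_, ?_, ?_⟩
    · rw [← h2f, hc2.1 i, ← h12, hc1.1 i, h1e]
    · rw [← h2f]
      exact hc2.2.1
    · rw [← h1e]
      exact hc1.2.2

end Aux

/-- If `η` is a strictly positive `γ`-eigenvector of the adjacency matrix
of the bipartite graph (`γ > 0`), then for every `k ≥ 0` the Jones projection element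
`e_k ∈ P_{k+2}` is a self-adjoint idempotent: `e_k² = e_k` and `e_k* = e_k`. -/
theorem jones_element_selfadjoint_idempotent
    {Γa Γb E : Type*} [Fintype Γa] [Fintype Γb] [Fintype E]
    (s : E → Γa) (t : E → Γb) (γ : ℝ) (hγ : 0 < γ)
    (η : Γa ⊕ Γb → ℝ) (hη : ∀ x, 0 < η x)
    (heig₁ : ∀ va : Γa,
      (∑ g : E, if s g = va then η (Sum.inr (t g)) else 0) = γ * η (Sum.inl va))
    (heig₂ : ∀ vb : Γb,
      (∑ g : E, if t g = vb then η (Sum.inl (s g)) else 0) = γ * η (Sum.inr vb))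
    (k : ℕ) :
    lmul (jonesE s t γ η k) (jonesE s t γ η k) = jonesE s t γ η k ∧
    starP (jonesE s t γ η k) = jonesE s t γ η k := by
  exact ⟨lmul_jonesE γ η hγ hη heig₁ heig₂, starP_jonesE γ η⟩

end
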